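/- Let P* be the I-projection of P onto a closed convex set L of probability distributions on a finite set Y (i.e., P* ∈ L minimizes D(Q||P) over Q ∈ L). Then for all Q ∈ L, D(Q||P) ≥ D(Q||P*) + D(P*||P). -/

import Mathlib

/-- I-divergence (Kullback-Leibler divergence) on a finite set. -/
noncomputable def kl {Y : Type*} [Fintype Y] (Q P : Y → ℝ) : ℝ :=
  ∑ y, Q y * Real.log (Q y / P y)

open Real Set

/-- Key lemma: directional derivative inequality at the minimizer. -/
lemma key_deriv {Y : Type*} [Fintype Y] (P Pstar : Y → ℝ) (d : Y → ℝ)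
    (hP : ∀ y, 0 < P y) (hps : ∀ y, 0 < Pstar y)
    (hmin : ∀ t ∈ Icc (0:ℝ) 1,
      (∑ y, Pstar y * (Real.log (Pstar y) - Real.log (P y))) ≤
      ∑ y, (Pstar y + t * d y) * (Real.log (Pstar y + t * d y) - Real.log (P y))) :
    0 ≤ ∑ y, (d y * (Real.log (Pstar y) - Real.log (P y)) + d y) := by
  set g : ℝ → ℝ := fun t => ∑ y, (Pstar y + t * d y) * (Real.log (Pstar y + t * d y) - Real.log (P y)) with hg
  have hder : HasDerivAt g (∑ y, (d y * (Real.log (Pstar y) - Real.log (P y)) + d y)) 0 := by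
    apply HasDerivAt.fun_sum
    intro y _
    have hu : HasDerivAt (fun t : ℝ => Pstar y + t * d y) (d y) 0 := by
      simpa using (hasDerivAt_mul_const (d y)).const_add (Pstar y)
    have hne : Pstar y + 0 * d y ≠ 0 := by simpa using (hps y).ne'
    have hlog : HasDerivAt (fun t : ℝ => Real.log (Pstar y + t * d y))
        (d y / (Pstar y + 0 * d y)) 0 := hu.log hne
    have := hu.fun_mul (hlog.sub_const (Real.log (P y)))
    convert this using 1
    · rfl
    rw [zero_mul, add_zero, mul_div_assoc', mul_div_cancel_left₀ _ (hps y).ne']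
  have hmin' : IsLocalMinOn g (Icc (0:ℝ) 1) 0 := by
    apply IsMinOn.localize
    intro t ht
    have h0 : g 0 = ∑ y, Pstar y * (Real.log (Pstar y) - Real.log (P y)) := by
      simp [hg]
    simp only [mem_setOf_eq, h0]
    exact hmin t ht
  have hy : (1:ℝ) ∈ posTangentConeAt (Icc (0:ℝ) 1) 0 := by
    apply mem_posTangentConeAt_of_segment_subset
    rw [segment_eq_Icc (by norm_num : (0:ℝ) ≤ 0 + 1)]
    norm_num
  have hfd : HasFDerivWithinAt g
      ((ContinuousLinearMap.id ℝ ℝ).smulRight (∑ y, (d y * (Real.log (Pstar y) - Real.log (P y)) + d y)))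
      (Icc (0:ℝ) 1) 0 := by
    exact (hder.hasFDerivAt).hasFDerivWithinAt
  have := hmin'.hasFDerivWithinAt_nonneg hfd hy
  simpa using this

theorem stmt1 {Y : Type*} [Fintype Y] (P : Y → ℝ)
    (hP : ∀ y, 0 < P y) (hPs : ∑ y, P y = 1)
    (L : Set (Y → ℝ))
    (hLpos : ∀ Q ∈ L, (∀ y, 0 < Q y) ∧ ∑ y, Q y = 1)
    (hLclosed : IsClosed L) (hLconvex : Convex ℝ L)
    (Pstar : Y → ℝ) (hPstar : Pstar ∈ L)
    (hmin : ∀ Q ∈ L, kl Pstar P ≤ kl Q P) :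
    ∀ Q ∈ L, kl Q P ≥ kl Q Pstar + kl Pstar P := by
  intro Q hQ
  obtain ⟨hQpos, hQs⟩ := hLpos Q hQ
  obtain ⟨hpspos, hpss⟩ := hLpos Pstar hPstar
  -- rewrite kl in terms of log differences
  have klrw : ∀ (A B : Y → ℝ), (∀ y, 0 < A y) → (∀ y, 0 < B y) →
      kl A B = ∑ y, A y * (Real.log (A y) - Real.log (B y)) := by
    intro A B hA hB
    unfold kl
    refine Finset.sum_congr rfl fun y _ => ?_
    rw [Real.log_div (hA y).ne' (hB y).ne']
  have hd : ∑ y, (Q y - Pstar y) = 0 := by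
    rw [Finset.sum_sub_distrib, hQs, hpss]; ring
  have hkey : 0 ≤ ∑ y, ((Q y - Pstar y) * (Real.log (Pstar y) - Real.log (P y)) + (Q y - Pstar y)) := by
    apply key_deriv P Pstar (fun y => Q y - Pstar y) hP hpspos
    intro t ht
    have hmem : (fun y => Pstar y + t * (Q y - Pstar y)) ∈ L := by
      have := hLconvex hPstar hQ (by linarith [ht.2] : (0:ℝ) ≤ 1 - t) ht.1 (by ring)
      convert this using 1
      funext y
      simp [smul_eq_mul]
      ring
    have h1 := hmin _ hmem
    have hpos' : ∀ y, 0 < Pstar y + t * (Q y - Pstar y) := by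
      intro y
      have : Pstar y + t * (Q y - Pstar y) = (1 - t) * Pstar y + t * Q y := by ring
      rw [this]
      rcases eq_or_lt_of_le ht.1 with h | h
      · simp [← h]; exact hpspos y
      · have := hQpos y
        have h2 : 0 ≤ (1 - t) * Pstar y := mul_nonneg (by linarith [ht.2]) (hpspos y).le
        nlinarith
    rw [klrw Pstar P hpspos hP, klrw _ P hpos' hP] at h1
    exact h1
  have hsum : ∑ y, ((Q y - Pstar y) * (Real.log (Pstar y) - Real.log (P y)) + (Q y - Pstar y))
      = ∑ y, (Q y - Pstar y) * (Real.log (Pstar y) - Real.log (P y)) := by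
    rw [Finset.sum_add_distrib, hd, add_zero]
  rw [hsum] at hkey
  rw [klrw Q P hQpos hP, klrw Q Pstar hQpos hpspos, klrw Pstar P hpspos hP]
  have expand : ∑ y, Q y * (Real.log (Q y) - Real.log (P y))
      - (∑ y, Q y * (Real.log (Q y) - Real.log (Pstar y)) + ∑ y, Pstar y * (Real.log (Pstar y) - Real.log (P y)))
      = ∑ y, (Q y - Pstar y) * (Real.log (Pstar y) - Real.log (P y)) := by
    rw [← Finset.sum_add_distrib, ← Finset.sum_sub_distrib]
    refine Finset.sum_congr rfl fun y _ => ?_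
    ring
  linarith [expand, hkey]
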